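/- Let n > k > 0 be coprime with k < n − k, and suppose n/k has continued fraction expansion [c_1, …, c_s] with c_1, c_s > 1. Then n²/(nk − 1) = [c_1, …, c_{s−1}, c_s − 1, c_s + 1, c_{s−1}, …, c_1] if s is even, and n²/(nk − 1) = [c_1, …, c_{s−1}, c_s + 1, c_s − 1, c_{s−1}, …, c_1] if s is odd. -/

import Mathlib

/-- Value of a finite regular continued fraction `[a_1, …, a_t]`. -/
def cfVal : List ℤ → ℚ
  | [] => 0
  | [a] => (a : ℚ)
  | a :: b :: l => (a : ℚ) + 1 / cfVal (b :: l)

/-- product of the matrices [[x,1],[1,0]], stored as (a,b,c,d) = [[a,b],[c,d]] -/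
def cfM : List ℤ → ℤ × ℤ × ℤ × ℤ
  | [] => (1, 0, 0, 1)
  | x :: l =>
    (x * (cfM l).1 + (cfM l).2.2.1, x * (cfM l).2.1 + (cfM l).2.2.2, (cfM l).1, (cfM l).2.1)

def mul2 (p q : ℤ × ℤ × ℤ × ℤ) : ℤ × ℤ × ℤ × ℤ :=
  (p.1 * q.1 + p.2.1 * q.2.2.1, p.1 * q.2.1 + p.2.1 * q.2.2.2,
   p.2.2.1 * q.1 + p.2.2.2 * q.2.2.1, p.2.2.1 * q.2.1 + p.2.2.2 * q.2.2.2)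

lemma mul2_one_left (q : ℤ × ℤ × ℤ × ℤ) : mul2 (1,0,0,1) q = q := by
  obtain ⟨a, b, c, d⟩ := q; simp [mul2]

lemma mul2_assoc (p q r : ℤ × ℤ × ℤ × ℤ) : mul2 (mul2 p q) r = mul2 p (mul2 q r) := by
  obtain ⟨a, b, c, d⟩ := p; obtain ⟨e, f, g, h⟩ := q; obtain ⟨i, j, u, v⟩ := r
  simp only [mul2, Prod.mk.injEq]
  refine ⟨by ring, by ring, by ring, by ring⟩

lemma cfM_cons (x : ℤ) (l : List ℤ) : cfM (x :: l) = mul2 (x,1,1,0) (cfM l) := by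
  simp [cfM, mul2]

lemma cfM_append (l m : List ℤ) : cfM (l ++ m) = mul2 (cfM l) (cfM m) := by
  induction l with
  | nil => simp [cfM, mul2_one_left]
  | cons x l ih => rw [List.cons_append, cfM_cons, ih, cfM_cons, mul2_assoc]

def tr2 (p : ℤ × ℤ × ℤ × ℤ) : ℤ × ℤ × ℤ × ℤ := (p.1, p.2.2.1, p.2.1, p.2.2.2)

lemma cfM_reverse (l : List ℤ) : cfM l.reverse = tr2 (cfM l) := by
  induction l with
  | nil => simp [cfM, tr2]
  | cons x l ih =>
    rw [List.reverse_cons, cfM_append, ih]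
    show _ = tr2 (cfM (x :: l))
    simp only [cfM, mul2, tr2, Prod.mk.injEq]
    refine ⟨by ring, by ring, by ring, by ring⟩

lemma cfM_pos (l : List ℤ) (h : ∀ x ∈ l, 0 < x) :
    0 < (cfM l).1 ∧ 0 ≤ (cfM l).2.1 ∧ 0 ≤ (cfM l).2.2.1 ∧ 0 ≤ (cfM l).2.2.2 := by
  induction l with
  | nil => simp [cfM]
  | cons x l ih =>
    have hx : 0 < x := h x List.mem_cons_self
    obtain ⟨h1, h2, h3, h4⟩ := ih (fun y hy => h y (List.mem_cons_of_mem x hy))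
    refine ⟨?_, ?_, le_of_lt h1, h2⟩ <;> simp only [cfM] <;> nlinarith

lemma cfM_c_pos (x : ℤ) (l : List ℤ) (h : ∀ y ∈ x :: l, 0 < y) :
    0 < (cfM (x :: l)).2.2.1 := by
  have := cfM_pos l (fun y hy => h y (List.mem_cons_of_mem x hy))
  simpa only [cfM] using this.1

lemma cfM_det (l : List ℤ) :
    (cfM l).1 * (cfM l).2.2.2 - (cfM l).2.1 * (cfM l).2.2.1 = (-1) ^ l.length := by
  induction l with
  | nil => simp [cfM]
  | cons x l ih =>
    simp only [cfM, List.length_cons, pow_succ]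
    nlinarith [ih]

lemma cfVal_eq (l : List ℤ) (h : ∀ x ∈ l, 0 < x) :
    cfVal l = ((cfM l).1 : ℚ) / ((cfM l).2.2.1 : ℚ) := by
  induction l with
  | nil => simp [cfVal, cfM]
  | cons x l ih =>
    match l, ih with
    | [], _ => simp [cfVal, cfM]
    | y :: l', ih =>
      have h' : ∀ z ∈ y :: l', 0 < z := fun z hz => h z (List.mem_cons_of_mem x hz)
      have hv := ih h'
      have ha : 0 < (cfM (y :: l')).1 := (cfM_pos _ h').1
      have hc : 0 < (cfM (y :: l')).2.2.1 := cfM_c_pos y l' h'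
      have ha' : (((cfM (y :: l')).1 : ℤ) : ℚ) ≠ 0 := by exact_mod_cast ha.ne'
      have hc' : (((cfM (y :: l')).2.2.1 : ℤ) : ℚ) ≠ 0 := by exact_mod_cast hc.ne'
      show (x : ℚ) + 1 / cfVal (y :: l') =
        ((x * (cfM (y :: l')).1 + (cfM (y :: l')).2.2.1 : ℤ) : ℚ) / (((cfM (y :: l')).1 : ℤ) : ℚ)
      rw [hv]
      field_simp
      norm_cast

lemma cfM_c_pos' (l : List ℤ) (hl : l ≠ []) (h : ∀ y ∈ l, 0 < y) :
    0 < (cfM l).2.2.1 := by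
  cases l with
  | nil => exact absurd rfl hl
  | cons x l => exact cfM_c_pos x l h

/-- If `n/k = [c_1, …, c_s]` with `c_1, c_s > 1`, `gcd(n,k) = 1`, `0 < k < n - k`,
then `n²/(nk-1) = [c_1, …, c_{s-1}, c_s - 1, c_s + 1, c_{s-1}, …, c_1]` for `s`
even, and `n²/(nk-1) = [c_1, …, c_{s-1}, c_s + 1, c_s - 1, c_{s-1}, …, c_1]`
for `s` odd. -/
theorem tsing_cf_palindrome (n k : ℤ) (hk : 0 < k) (hkn : k < n - k)
    (hcop : IsCoprime n k) (c : List ℤ) (hne : c ≠ [])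
    (hpos : ∀ x ∈ c, 0 < x) (hhead : 1 < c.head!) (hlast : 1 < c.getLast!)
    (hcf : (n : ℚ) / k = cfVal c) :
    (Even c.length →
      (n ^ 2 : ℚ) / (n * k - 1) =
        cfVal (c.dropLast ++ [c.getLast! - 1, c.getLast! + 1] ++ c.dropLast.reverse)) ∧
    (Odd c.length →
      (n ^ 2 : ℚ) / (n * k - 1) =
        cfVal (c.dropLast ++ [c.getLast! + 1, c.getLast! - 1] ++ c.dropLast.reverse)) := by
  obtain rfl | ⟨L, t, rfl⟩ := List.eq_nil_or_concat c
  · exact absurd rfl hne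
  simp only [List.concat_eq_append] at hne hpos hhead hlast hcf ⊢
  have hgl : (L ++ [t]).getLast! = t := List.getLast!_of_getLast? List.getLast?_concat
  have hdl : (L ++ [t]).dropLast = L := by simp
  rw [hgl] at hlast
  have hposL : ∀ x ∈ L, 0 < x := fun x hx => hpos x (List.mem_append_left _ hx)
  obtain ⟨ha, hb, he, hd⟩ := cfM_pos L hposL
  -- components of cfM (L ++ [t])
  obtain ⟨P, hPdef⟩ : ∃ P, P = (cfM L).1 * t + (cfM L).2.1 := ⟨_, rfl⟩
  obtain ⟨Q, hQdef⟩ : ∃ Q, Q = (cfM L).2.2.1 * t + (cfM L).2.2.2 := ⟨_, rfl⟩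
  have hP : (cfM (L ++ [t])).1 = P := by
    rw [hPdef, cfM_append]; simp [cfM, mul2]
  have hQ : (cfM (L ++ [t])).2.2.1 = Q := by
    rw [hQdef, cfM_append]; simp [cfM, mul2]
  have hQpos : 0 < Q := by rw [← hQ]; exact cfM_c_pos' _ (by simp) hpos
  have hPpos : 0 < P := by rw [hPdef]; nlinarith
  -- n = P, k = Q
  have hcf2 : (n : ℚ) / k = (P : ℚ) / (Q : ℚ) := by
    rw [hcf, cfVal_eq _ hpos, hP, hQ]
  have hk0 : (k : ℚ) ≠ 0 := by exact_mod_cast hk.ne'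
  have hQ0 : (Q : ℚ) ≠ 0 := by exact_mod_cast hQpos.ne'
  have hcross : n * Q = P * k := by
    have := (div_eq_div_iff hk0 hQ0).mp hcf2
    exact_mod_cast this
  have hdetc := cfM_det (L ++ [t])
  have hsq : ((-1 : ℤ) ^ (L ++ [t]).length) * ((-1 : ℤ) ^ (L ++ [t]).length) = 1 := by
    rw [← pow_add]; exact Even.neg_one_pow ⟨_, rfl⟩
  have hcopPQ : IsCoprime P Q := by
    refine ⟨((-1 : ℤ) ^ (L ++ [t]).length) * (cfM (L ++ [t])).2.2.2,
      -(((-1 : ℤ) ^ (L ++ [t]).length) * (cfM (L ++ [t])).2.1), ?_⟩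
    rw [← hP, ← hQ]
    linear_combination ((-1 : ℤ) ^ (L ++ [t]).length) * hdetc + hsq
  have hQk : Q ∣ k :=
    hcopPQ.symm.dvd_of_dvd_mul_left ⟨n, by linear_combination -hcross⟩
  have hkQ : k ∣ Q :=
    hcop.symm.dvd_of_dvd_mul_left ⟨P, by linear_combination hcross⟩
  have hkeq : k = Q := Int.dvd_antisymm hk.le hQpos.le hkQ hQk
  have hneq : n = (cfM L).1 * t + (cfM L).2.1 := by
    rw [← hPdef]
    have h3 : n * Q = P * Q := by rw [hcross, hkeq]
    exact mul_right_cancel₀ hQpos.ne' h3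
  have hkeq2 : k = (cfM L).2.2.1 * t + (cfM L).2.2.2 := by rw [hkeq, hQdef]
  have hdetL := cfM_det L
  have hposBig1 : ∀ x ∈ L ++ [t - 1, t + 1] ++ L.reverse, 0 < x := by
    intro x hx
    rw [List.mem_append, List.mem_append, List.mem_reverse] at hx
    rcases hx with (hx | hx) | hx
    · exact hposL x hx
    · simp only [List.mem_cons, List.not_mem_nil, or_false] at hx
      rcases hx with rfl | rfl <;> omega
    · exact hposL x hx
  have hposBig2 : ∀ x ∈ L ++ [t + 1, t - 1] ++ L.reverse, 0 < x := by
    intro x hx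
    rw [List.mem_append, List.mem_append, List.mem_reverse] at hx
    rcases hx with (hx | hx) | hx
    · exact hposL x hx
    · simp only [List.mem_cons, List.not_mem_nil, or_false] at hx
      rcases hx with rfl | rfl <;> omega
    · exact hposL x hx
  rw [hgl, hdl]
  constructor
  · intro hev
    have hodd : Odd L.length := by
      simpa [List.length_append, Nat.even_add_one, Nat.not_even_iff_odd] using hev
    have hdet' : (cfM L).1 * (cfM L).2.2.2 - (cfM L).2.1 * (cfM L).2.2.1 = -1 := by
      rw [hdetL, hodd.neg_one_pow]
    rw [cfVal_eq _ hposBig1]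
    have h1 : (cfM (L ++ [t - 1, t + 1] ++ L.reverse)).1 = n ^ 2 := by
      rw [cfM_append, cfM_append, cfM_reverse, hneq]
      simp only [cfM, mul2, tr2]
      ring
    have h2 : (cfM (L ++ [t - 1, t + 1] ++ L.reverse)).2.2.1 = n * k - 1 := by
      rw [cfM_append, cfM_append, cfM_reverse, hneq, hkeq2]
      simp only [cfM, mul2, tr2]
      linear_combination hdet'
    rw [h1, h2]; push_cast; ring
  · intro hod
    have heL : Even L.length := by
      rcases hod with ⟨m, hm⟩
      simp only [List.length_append, List.length_singleton] at hm
      exact ⟨m, by omega⟩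
    have hdet' : (cfM L).1 * (cfM L).2.2.2 - (cfM L).2.1 * (cfM L).2.2.1 = 1 := by
      rw [hdetL, heL.neg_one_pow]
    rw [cfVal_eq _ hposBig2]
    have h1 : (cfM (L ++ [t + 1, t - 1] ++ L.reverse)).1 = n ^ 2 := by
      rw [cfM_append, cfM_append, cfM_reverse, hneq]
      simp only [cfM, mul2, tr2]
      ring
    have h2 : (cfM (L ++ [t + 1, t - 1] ++ L.reverse)).2.2.1 = n * k - 1 := by
      rw [cfM_append, cfM_append, cfM_reverse, hneq, hkeq2]
      simp only [cfM, mul2, tr2]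
      linear_combination -hdet'
    rw [h1, h2]; push_cast; ring
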